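/- There is a short exact sequence of ℤ[G]-modules 0 → 𝓘_I/g̃𝓘_I → ℤ[G]/(g̃) → ℤ[G/I]/(g) → 0, in which the first map is induced by the inclusion 𝓘_I ⊆ ℤ[G] (in particular this induced map is injective) and the second map is induced by the projection ℤ[G] → ℤ[G/I]. -/

import Mathlib

open MonoidAlgebra

/-- The projection `ℤ[G] → ℤ[G/I]`. -/
noncomputable def toQuot {G : Type} [CommGroup G] (I : Subgroup G) :
    MonoidAlgebra ℤ G →+* MonoidAlgebra ℤ (G ⧸ I) :=
  MonoidAlgebra.mapDomainRingHom ℤ (QuotientGroup.mk' I)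

/-- The ideal `𝓘_I = ker(ℤ[G] → ℤ[G/I])`. -/
noncomputable def kerIdeal {G : Type} [CommGroup G] (I : Subgroup G) :
    Ideal (MonoidAlgebra ℤ G) :=
  RingHom.ker (toQuot I)

/-- The element `g̃ = 1 − φ̃⁻¹ + #I ∈ ℤ[G]`. -/
noncomputable def gtilde {G : Type} [CommGroup G] (I : Subgroup G) (φt : G) :
    MonoidAlgebra ℤ G :=
  1 - MonoidAlgebra.of ℤ G φt⁻¹ + (Nat.card I : MonoidAlgebra ℤ G)

/-- `1 - single a 1 + n` is a nonzerodivisor in `ℤ[H]` when `n ≥ 1`. -/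
lemma reg_aux {H : Type} [Group H] (a : H) (n : ℕ) (hn : 0 < n)
    (y : MonoidAlgebra ℤ H)
    (h : (1 - MonoidAlgebra.single a (1:ℤ) + (n : MonoidAlgebra ℤ H)) * y = 0) :
    y = 0 := by
  by_contra hy
  have hsupp : y.coeff.support.Nonempty :=
    Finsupp.support_nonempty_iff.mpr (mt MonoidAlgebra.coeff_eq_zero.mp hy)
  obtain ⟨x₀, hx₀, hmax⟩ := y.coeff.support.exists_max_image (fun x => |y.coeff x|) hsupp
  have h' : (y - MonoidAlgebra.single a (1:ℤ) * y
      + MonoidAlgebra.single 1 (n:ℤ) * y : MonoidAlgebra ℤ H) = 0 := by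
    rw [← h, MonoidAlgebra.natCast_def, add_mul, sub_mul, one_mul]
  have key : y.coeff (a⁻¹ * x₀) = y.coeff x₀ + n * y.coeff x₀ := by
    have h2 : (y - MonoidAlgebra.single a (1:ℤ) * y
        + MonoidAlgebra.single 1 (n:ℤ) * y : MonoidAlgebra ℤ H).coeff x₀ = (0 : MonoidAlgebra ℤ H).coeff x₀ := by
      rw [h']
    rw [MonoidAlgebra.coeff_add, MonoidAlgebra.coeff_sub, Finsupp.add_apply, Finsupp.sub_apply,
      MonoidAlgebra.coeff_single_mul_apply, MonoidAlgebra.coeff_single_mul_apply] at h2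
    simp at h2
    linarith
  have hx₀ne : y.coeff x₀ ≠ 0 := Finsupp.mem_support_iff.mp hx₀
  have hnz : (0:ℤ) < n := by exact_mod_cast hn
  have hmem : a⁻¹ * x₀ ∈ y.coeff.support := by
    rw [Finsupp.mem_support_iff, key]
    intro hc
    have : y.coeff x₀ * (1 + n) = 0 := by linarith
    rcases mul_eq_zero.mp this with h | h
    · exact hx₀ne h
    · linarith
  have hle := hmax _ hmem
  rw [key] at hle
  have h1 : |y.coeff x₀ + n * y.coeff x₀| = (1 + n) * |y.coeff x₀| := by
    rw [show y.coeff x₀ + (n:ℤ) * y.coeff x₀ = (1 + n) * y.coeff x₀ by ring, abs_mul, abs_of_pos (by linarith)]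
  rw [h1] at hle
  have : (0:ℤ) < |y.coeff x₀| := abs_pos.mpr hx₀ne
  nlinarith

lemma toQuot_single {G : Type} [CommGroup G] (I : Subgroup G) (g : G) (r : ℤ) :
    toQuot I (MonoidAlgebra.single g r) = MonoidAlgebra.single (QuotientGroup.mk g) r := by
  simp [toQuot, MonoidAlgebra.mapDomainRingHom, Finsupp.mapDomain_single]

lemma toQuot_surjective {G : Type} [CommGroup G] (I : Subgroup G) :
    Function.Surjective (toQuot I) := by
  intro s
  induction s using MonoidAlgebra.induction_linear with
  | zero => exact ⟨0, map_zero _⟩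
  | add f g hf hg =>
      obtain ⟨a, ha⟩ := hf; obtain ⟨b, hb⟩ := hg
      exact ⟨a + b, by rw [map_add, ha, hb]⟩
  | single q r =>
      obtain ⟨g, rfl⟩ := QuotientGroup.mk'_surjective I q
      exact ⟨MonoidAlgebra.single g r, toQuot_single I g r⟩

lemma toQuot_gtilde {G : Type} [CommGroup G] (I : Subgroup G) (φt : G) :
    toQuot I (gtilde I φt)
      = 1 - MonoidAlgebra.single (QuotientGroup.mk φt⁻¹ : G ⧸ I) (1:ℤ)
        + (Nat.card I : MonoidAlgebra ℤ (G ⧸ I)) := by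
  rw [gtilde, map_add, map_sub, map_one, map_natCast]
  rw [MonoidAlgebra.of_apply, toQuot_single]

/-- regularity upstairs: if `π (g̃ * x) = 0` then `π x = 0`. -/
lemma toQuot_reg {G : Type} [CommGroup G] [Fintype G] (I : Subgroup G) (φt : G)
    (x : MonoidAlgebra ℤ G) (h : toQuot I (gtilde I φt * x) = 0) : toQuot I x = 0 := by
  rw [map_mul, toQuot_gtilde] at h
  exact reg_aux _ (Nat.card I) Nat.card_pos _ h

/-- there is a short exact sequence of `ℤ[G]`-modules
`0 → 𝓘_I/g̃𝓘_I → ℤ[G]/(g̃) → ℤ[G/I]/(g) → 0`, the first map being induced by the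
inclusion `𝓘_I ⊆ ℤ[G]` (in particular it is injective) and the second induced by the
projection `ℤ[G] → ℤ[G/I]` (here `g = π(g̃) = 1 − φ⁻¹ + #I ∈ ℤ[G/I]`). -/
theorem statement7 {G : Type} [CommGroup G] [Fintype G] (I D : Subgroup G) (hID : I ≤ D)
    (φt : G) (hφt : φt ∈ D) (hφgen : ∀ d ∈ D, ∃ n : ℤ, φt ^ n * d⁻¹ ∈ I) :
    ∃ (f₁ : (↥(kerIdeal I) ⧸
          (Submodule.comap (kerIdeal I).subtype
            (Ideal.span {gtilde I φt} * kerIdeal I : Ideal (MonoidAlgebra ℤ G))))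
        →ₗ[MonoidAlgebra ℤ G] (MonoidAlgebra ℤ G ⧸ Ideal.span {gtilde I φt}))
      (f₂ : (MonoidAlgebra ℤ G ⧸ Ideal.span {gtilde I φt}) →+*
        (MonoidAlgebra ℤ (G ⧸ I) ⧸ Ideal.span {toQuot I (gtilde I φt)})),
      (∀ x : ↥(kerIdeal I),
        f₁ (Submodule.Quotient.mk x) = Ideal.Quotient.mk (Ideal.span {gtilde I φt}) ↑x) ∧
      (∀ x : MonoidAlgebra ℤ G,
        f₂ (Ideal.Quotient.mk (Ideal.span {gtilde I φt}) x)
          = Ideal.Quotient.mk (Ideal.span {toQuot I (gtilde I φt)}) (toQuot I x)) ∧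
      Function.Injective f₁ ∧ Function.Exact f₁ f₂ ∧ Function.Surjective f₂ := by
  classical
  set P : Ideal (MonoidAlgebra ℤ G) := Ideal.span {gtilde I φt} with hP
  set Q : Ideal (MonoidAlgebra ℤ (G ⧸ I)) := Ideal.span {toQuot I (gtilde I φt)} with hQ
  -- first map
  have hcond1 : Submodule.comap (kerIdeal I).subtype (P * kerIdeal I)
      ≤ LinearMap.ker (P.mkQ ∘ₗ (kerIdeal I).subtype) := by
    intro x hx
    simp only [Submodule.mem_comap] at hx
    have : (x : MonoidAlgebra ℤ G) ∈ P := Ideal.mul_le_left hx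
    rw [LinearMap.mem_ker, LinearMap.comp_apply, Submodule.subtype_apply, Submodule.mkQ_apply,
      Submodule.Quotient.mk_eq_zero]
    exact this
  have hcond2 : ∀ a ∈ P, ((Ideal.Quotient.mk Q).comp (toQuot I)) a = 0 := by
    intro a ha
    obtain ⟨r, rfl⟩ := Ideal.mem_span_singleton'.mp ha
    show Ideal.Quotient.mk Q (toQuot I (r * gtilde I φt)) = 0
    rw [Ideal.Quotient.eq_zero_iff_mem, map_mul]
    exact Ideal.mem_span_singleton'.mpr ⟨toQuot I r, rfl⟩
  refine ⟨Submodule.liftQ _ (P.mkQ ∘ₗ (kerIdeal I).subtype) hcond1,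
    Ideal.Quotient.lift P ((Ideal.Quotient.mk Q).comp (toQuot I)) hcond2, ?_, ?_, ?_, ?_, ?_⟩
  · intro x; rfl
  · intro x; rfl
  · -- injectivity of f₁
    refine (injective_iff_map_eq_zero
      (Submodule.liftQ _ (P.mkQ ∘ₗ (kerIdeal I).subtype) hcond1)).mpr ?_
    intro z hz
    obtain ⟨x, rfl⟩ := Submodule.Quotient.mk_surjective _ z
    have hx : (x : MonoidAlgebra ℤ G) ∈ P := by
      have : Submodule.Quotient.mk (p := P) (x : MonoidAlgebra ℤ G) = 0 := hz
      exact (Submodule.Quotient.mk_eq_zero _).mp this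
    obtain ⟨r, hr⟩ := Ideal.mem_span_singleton'.mp hx
    have hπx : toQuot I (x : MonoidAlgebra ℤ G) = 0 := x.2
    have hπr : toQuot I r = 0 := by
      apply toQuot_reg I φt
      rw [mul_comm, hr]; exact hπx
    have hrJ : r ∈ kerIdeal I := by
      simpa [kerIdeal, RingHom.mem_ker] using hπr
    have hmem : (x : MonoidAlgebra ℤ G) ∈ P * kerIdeal I := by
      rw [mul_comm] at hr
      rw [← hr]
      exact Ideal.mul_mem_mul (Ideal.mem_span_singleton_self _) hrJ
    rw [Submodule.Quotient.mk_eq_zero]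
    exact hmem
  · -- exactness
    intro y
    obtain ⟨x, rfl⟩ := Ideal.Quotient.mk_surjective y
    constructor
    · intro h0
      have : toQuot I x ∈ Q := by
        rwa [Ideal.Quotient.lift_mk, RingHom.comp_apply, Ideal.Quotient.eq_zero_iff_mem] at h0
      obtain ⟨s, hs⟩ := Ideal.mem_span_singleton'.mp this
      obtain ⟨r, rfl⟩ := toQuot_surjective I s
      have hker : x - r * gtilde I φt ∈ kerIdeal I := by
        simp only [kerIdeal, RingHom.mem_ker, map_sub, map_mul, hs, sub_self]
      refine ⟨Submodule.Quotient.mk ⟨x - r * gtilde I φt, hker⟩, ?_⟩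
      show Ideal.Quotient.mk P (x - r * gtilde I φt) = Ideal.Quotient.mk P x
      rw [Ideal.Quotient.eq]
      refine Ideal.mem_span_singleton'.mpr ⟨-r, by ring⟩
    · rintro ⟨z, hz⟩
      obtain ⟨w, rfl⟩ := Submodule.Quotient.mk_surjective _ z
      have hw : Ideal.Quotient.mk P (w : MonoidAlgebra ℤ G) = Ideal.Quotient.mk P x := hz
      rw [← hw, Ideal.Quotient.lift_mk, RingHom.comp_apply]
      have : toQuot I (w : MonoidAlgebra ℤ G) = 0 := w.2
      rw [this, map_zero]
  · -- surjectivity of f₂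
    intro t
    obtain ⟨s, rfl⟩ := Ideal.Quotient.mk_surjective t
    obtain ⟨x, rfl⟩ := toQuot_surjective I s
    exact ⟨Ideal.Quotient.mk P x, rfl⟩
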